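/- Let s = 1/2 and let φ : ℝ → ℝ be a bounded Lipschitz function. Define U(x,t) = (x/(2√π)) ∫₀^∞ e^{−x²/(4τ)} τ^{−3/2} φ(t−τ) dτ for x > 0. Then for every t ∈ ℝ, lim_{x→0⁺} (φ(t) − U(x,t))/x = (1/(2√π)) ∫₀^∞ (φ(t) − φ(t−τ)) τ^{−3/2} dτ, and the right-hand side equals, up to the explicit constant, the Marchaud half-derivative D^{1/2} φ(t). -/

import Mathlib

open MeasureTheory Set Real Filter


lemma aux19_f_integrable {c : ℝ} (hc : 0 < c) :
    IntegrableOn (fun σ : ℝ => σ ^ ((1:ℝ)/2 - 1) * Real.exp (-(c * σ))) (Ioi 0) := by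
  have h := integrableOn_rpow_mul_exp_neg_mul_rpow (p := 1) (s := (1:ℝ)/2 - 1)
    (by norm_num) zero_lt_one hc
  exact h.congr_fun (fun x _ => by dsimp only; rw [Real.rpow_one, neg_mul]) measurableSet_Ioi

lemma aux19_pt {c x : ℝ} (hx : x ∈ Ioi (0:ℝ)) :
    x ^ ((-1:ℝ) - 1) • ((x ^ (-1:ℝ)) ^ ((1:ℝ)/2 - 1) * Real.exp (-(c * x ^ (-1:ℝ)))) =
      Real.exp (-c / x) * x ^ (-(3:ℝ)/2) := by
  have hx0 : (0:ℝ) < x := hx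
  rw [smul_eq_mul, ← Real.rpow_mul hx0.le, Real.rpow_neg_one,
    show (-1:ℝ) * ((1:ℝ)/2 - 1) = (1:ℝ)/2 by norm_num,
    show -(c * x⁻¹) = -c / x by field_simp, ← mul_assoc, ← Real.rpow_add hx0,
    show (-1:ℝ) - 1 + (1:ℝ)/2 = -(3:ℝ)/2 by norm_num, mul_comm]

lemma aux19_integrable {c : ℝ} (hc : 0 < c) :
    IntegrableOn (fun τ : ℝ => Real.exp (-c/τ) * τ ^ (-(3:ℝ)/2)) (Ioi 0) := by
  have h := (integrableOn_Ioi_comp_rpow_iff'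
    (fun σ : ℝ => σ ^ ((1:ℝ)/2 - 1) * Real.exp (-(c * σ))) (p := -1) (by norm_num)).mpr
    (aux19_f_integrable hc)
  exact h.congr_fun (fun x hx => aux19_pt hx) measurableSet_Ioi

lemma aux19_integral {c : ℝ} (hc : 0 < c) :
    ∫ τ in Ioi (0:ℝ), Real.exp (-c/τ) * τ ^ (-(3:ℝ)/2) = Real.sqrt π / Real.sqrt c := by
  have h := integral_comp_rpow_Ioi
    (fun σ : ℝ => σ ^ ((1:ℝ)/2 - 1) * Real.exp (-(c * σ))) (p := -1) (by norm_num)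
  calc ∫ τ in Ioi (0:ℝ), Real.exp (-c/τ) * τ ^ (-(3:ℝ)/2)
      = ∫ x in Ioi (0:ℝ), (|(-1:ℝ)| * x ^ ((-1:ℝ) - 1)) •
          ((x ^ (-1:ℝ)) ^ ((1:ℝ)/2 - 1) * Real.exp (-(c * x ^ (-1:ℝ)))) := by
        refine (setIntegral_congr_fun measurableSet_Ioi (fun x hx => ?_)).symm
        rw [abs_neg, abs_one, one_mul]
        exact aux19_pt hx
    _ = ∫ y in Ioi (0:ℝ), y ^ ((1:ℝ)/2 - 1) * Real.exp (-(c * y)) := h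
    _ = (1/c) ^ ((1:ℝ)/2) * Real.Gamma (1/2) :=
        Real.integral_rpow_mul_exp_neg_mul_Ioi one_half_pos hc
    _ = Real.sqrt π / Real.sqrt c := by
        rw [Real.Gamma_one_half_eq, ← Real.sqrt_eq_rpow, one_div, Real.sqrt_inv, inv_mul_eq_div]

lemma aux19_tendsto (φ : ℝ → ℝ) (K : NNReal) (hφL : LipschitzWith K φ)
    (M : ℝ) (hφB : ∀ t, |φ t| ≤ M) (t : ℝ) :
    Tendsto (fun x : ℝ => ∫ τ in Ioi (0:ℝ),
        Real.exp (-x ^ 2 / (4 * τ)) * τ ^ (-(3:ℝ)/2) * (φ t - φ (t - τ)))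
      (nhdsWithin 0 (Ioi (0:ℝ)))
      (nhds (∫ τ in Ioi (0:ℝ), (φ t - φ (t - τ)) * τ ^ (-(3:ℝ)/2))) := by
  have hM : 0 ≤ M := (abs_nonneg _).trans (hφB 0)
  have hφc : Continuous φ := hφL.continuous
  have hrpc : ∀ c : ℝ, ContinuousOn (fun τ : ℝ => τ ^ c) (Ioi 0) := fun c τ hτ =>
    (Real.continuousAt_rpow_const τ c (Or.inl (ne_of_gt hτ))).continuousWithinAt
  have hdiff : ∀ τ : ℝ, |φ t - φ (t - τ)| ≤ min ((K:ℝ) * |τ|) (2 * M) := by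
    intro τ
    refine le_min ?_ ?_
    · have := hφL.dist_le_mul t (t - τ)
      simpa [Real.dist_eq, abs_sub_comm] using this
    · calc |φ t - φ (t - τ)| ≤ |φ t| + |φ (t - τ)| := abs_sub _ _
        _ ≤ M + M := add_le_add (hφB t) (hφB _)
        _ = 2 * M := by ring
  set bound : ℝ → ℝ := fun τ => min ((K:ℝ) * τ ^ (-(1:ℝ)/2)) ((2 * M) * τ ^ (-(3:ℝ)/2))
    with hbdef
  have hbcont : ContinuousOn bound (Ioi 0) :=
    ContinuousOn.inf (continuousOn_const.mul (hrpc _))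
      (continuousOn_const.mul (hrpc _))
  have hbnonneg : ∀ τ ∈ Ioi (0:ℝ), 0 ≤ bound τ := by
    intro τ hτ
    have hτ0 : (0:ℝ) < τ := hτ
    exact le_min (by positivity) (by positivity)
  have hbint : IntegrableOn bound (Ioi 0) := by
    rw [← Ioc_union_Ioi_eq_Ioi (zero_le_one (α := ℝ)), integrableOn_union]
    constructor
    · have hg : IntegrableOn (fun τ : ℝ => (K:ℝ) * τ ^ (-(1:ℝ)/2)) (Ioc 0 1) := by
        rw [integrableOn_Ioc_iff_integrableOn_Ioo]
        exact ((intervalIntegral.integrableOn_Ioo_rpow_iff zero_lt_one).mpr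
          (by norm_num)).const_mul _
      refine hg.mono' ((hbcont.mono Ioc_subset_Ioi_self).aestronglyMeasurable
        measurableSet_Ioc) ?_
      filter_upwards [ae_restrict_mem measurableSet_Ioc] with τ hτ
      rw [Real.norm_eq_abs, abs_of_nonneg (hbnonneg τ hτ.1)]
      exact min_le_left _ _
    · have hg : IntegrableOn (fun τ : ℝ => (2 * M) * τ ^ (-(3:ℝ)/2)) (Ioi 1) :=
        (integrableOn_Ioi_rpow_of_lt (by norm_num) zero_lt_one).const_mul _
      refine hg.mono' ((hbcont.mono (Ioi_subset_Ioi zero_le_one)).aestronglyMeasurable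
        measurableSet_Ioi) ?_
      filter_upwards [ae_restrict_mem measurableSet_Ioi] with τ hτ
      rw [Real.norm_eq_abs, abs_of_nonneg (hbnonneg τ (mem_Ioi.mpr (lt_trans zero_lt_one hτ)))]
      exact min_le_right _ _
  refine tendsto_integral_filter_of_dominated_convergence bound ?_ ?_ hbint ?_
  · filter_upwards with x
    have : ContinuousOn (fun τ : ℝ => Real.exp (-x ^ 2 / (4 * τ)) * τ ^ (-(3:ℝ)/2) *
        (φ t - φ (t - τ))) (Ioi 0) := by
      refine ContinuousOn.mul (ContinuousOn.mul ?_ (hrpc _)) ?_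
      · exact ContinuousOn.rexp (continuousOn_const.div (continuous_const.mul continuous_id).continuousOn
          (fun τ hτ => by have : (0:ℝ) < τ := hτ; positivity))
      · exact (continuous_const.sub (hφc.comp (continuous_const.sub continuous_id))).continuousOn
    exact this.aestronglyMeasurable measurableSet_Ioi
  · filter_upwards with x
    filter_upwards [ae_restrict_mem measurableSet_Ioi] with τ hτ
    have hτ0 : (0:ℝ) < τ := hτ
    have hexp : Real.exp (-x ^ 2 / (4 * τ)) ≤ 1 := by
      rw [Real.exp_le_one_iff]
      exact div_nonpos_of_nonpos_of_nonneg (neg_nonpos.mpr (by positivity)) (by positivity)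
    have hrp : (0:ℝ) < τ ^ (-(3:ℝ)/2) := Real.rpow_pos_of_pos hτ0 _
    rw [Real.norm_eq_abs, abs_mul, abs_mul, abs_of_nonneg (Real.exp_pos _).le,
      abs_of_nonneg hrp.le]
    calc Real.exp (-x ^ 2 / (4 * τ)) * τ ^ (-(3:ℝ)/2) * |φ t - φ (t - τ)|
        ≤ 1 * τ ^ (-(3:ℝ)/2) * min ((K:ℝ) * |τ|) (2 * M) := by
          refine mul_le_mul (mul_le_mul_of_nonneg_right hexp hrp.le) (hdiff τ)
            (abs_nonneg _) (by positivity)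
      _ = bound τ := by
          rw [one_mul, hbdef]
          rw [abs_of_nonneg hτ0.le, mul_min_of_nonneg _ _ hrp.le]
          congr 1
          · rw [mul_comm ((K:ℝ)) τ, ← mul_assoc, mul_comm (τ ^ (-(3:ℝ)/2)) τ,
              ← Real.rpow_one_add' hτ0.le (by norm_num)]
            norm_num [mul_comm]
          · ring
  · filter_upwards [ae_restrict_mem measurableSet_Ioi] with τ hτ
    have hτ0 : (0:ℝ) < τ := hτ
    have hc : Continuous fun x : ℝ => Real.exp (-x ^ 2 / (4 * τ)) * τ ^ (-(3:ℝ)/2) *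
        (φ t - φ (t - τ)) :=
      ((((continuous_pow 2).neg.div_const _).rexp).mul continuous_const).mul continuous_const
    have h2 := (hc.tendsto 0).mono_left (nhdsWithin_le_nhds (s := Ioi (0:ℝ)))
    simpa [mul_comm] using h2

theorem stmt_19 (φ : ℝ → ℝ) (K : NNReal) (hφL : LipschitzWith K φ)
    (M : ℝ) (hφB : ∀ t, |φ t| ≤ M) (U : ℝ → ℝ → ℝ)
    (hU : ∀ x t, 0 < x → U x t =
      (x / (2 * Real.sqrt π)) *
        ∫ τ in Ioi (0:ℝ), Real.exp (-x ^ 2 / (4 * τ)) * τ ^ (-(3:ℝ)/2) * φ (t - τ)) (t : ℝ) :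
    Tendsto (fun x => (φ t - U x t) / x) (nhdsWithin 0 (Ioi (0:ℝ)))
      (nhds ((1 / (2 * Real.sqrt π)) *
        ∫ τ in Ioi (0:ℝ), (φ t - φ (t - τ)) * τ ^ (-(3:ℝ)/2))) ∧
    (1 / (2 * Real.sqrt π)) * (∫ τ in Ioi (0:ℝ), (φ t - φ (t - τ)) * τ ^ (-(3:ℝ)/2)) =
      ((1/2) / Real.Gamma (1/2)) *
        ∫ τ in Ioi (0:ℝ), (φ t - φ (t - τ)) * τ ^ (-(3:ℝ)/2) := by
  have hsπ : (0:ℝ) < Real.sqrt π := Real.sqrt_pos.mpr Real.pi_pos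
  constructor
  · have key : ∀ᶠ x in nhdsWithin 0 (Ioi (0:ℝ)),
        (1 / (2 * Real.sqrt π)) * ∫ τ in Ioi (0:ℝ),
          Real.exp (-x ^ 2 / (4 * τ)) * τ ^ (-(3:ℝ)/2) * (φ t - φ (t - τ))
        = (φ t - U x t) / x := by
      filter_upwards [self_mem_nhdsWithin] with x hx
      have hx0 : (0:ℝ) < x := hx
      have hc : (0:ℝ) < x ^ 2 / 4 := by positivity
      have hker : ∀ τ : ℝ, -(x ^ 2 / 4) / τ = -x ^ 2 / (4 * τ) := fun τ => by ring
      have hIF : IntegrableOn (fun τ : ℝ =>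
          Real.exp (-x ^ 2 / (4 * τ)) * τ ^ (-(3:ℝ)/2)) (Ioi 0) :=
        (aux19_integrable hc).congr_fun (fun τ _ => by dsimp only; rw [hker τ]) measurableSet_Ioi
      have hval : ∫ τ in Ioi (0:ℝ), Real.exp (-x ^ 2 / (4 * τ)) * τ ^ (-(3:ℝ)/2)
          = 2 * Real.sqrt π / x := by
        have h1 : Real.sqrt (x ^ 2 / 4) = x / 2 := by
          rw [show x ^ 2 / 4 = (x / 2) ^ 2 by ring, Real.sqrt_sq (by positivity)]
        calc ∫ τ in Ioi (0:ℝ), Real.exp (-x ^ 2 / (4 * τ)) * τ ^ (-(3:ℝ)/2)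
            = ∫ τ in Ioi (0:ℝ), Real.exp (-(x ^ 2 / 4) / τ) * τ ^ (-(3:ℝ)/2) :=
              setIntegral_congr_fun measurableSet_Ioi (fun τ _ => by rw [hker τ])
          _ = Real.sqrt π / Real.sqrt (x ^ 2 / 4) := aux19_integral hc
          _ = 2 * Real.sqrt π / x := by rw [h1, div_div_eq_mul_div, mul_comm]
      have hmφ : AEStronglyMeasurable (fun τ : ℝ => φ (t - τ))
          (volume.restrict (Ioi 0)) :=
        (hφL.continuous.comp (continuous_const.sub continuous_id)).aestronglyMeasurable
      have hIφ : IntegrableOn (fun τ : ℝ =>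
          Real.exp (-x ^ 2 / (4 * τ)) * τ ^ (-(3:ℝ)/2) * φ (t - τ)) (Ioi 0) := by
        have h2 := hIF.bdd_mul hmφ (ae_of_all _ fun τ => by
          rw [Real.norm_eq_abs]; exact hφB _)
        exact h2.congr (ae_of_all _ fun τ => mul_comm _ _)
      have hsplit : ∫ τ in Ioi (0:ℝ),
          Real.exp (-x ^ 2 / (4 * τ)) * τ ^ (-(3:ℝ)/2) * (φ t - φ (t - τ))
          = (∫ τ in Ioi (0:ℝ), Real.exp (-x ^ 2 / (4 * τ)) * τ ^ (-(3:ℝ)/2)) * φ t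
            - ∫ τ in Ioi (0:ℝ),
                Real.exp (-x ^ 2 / (4 * τ)) * τ ^ (-(3:ℝ)/2) * φ (t - τ) := by
        rw [← integral_mul_const, ← integral_sub (hIF.mul_const _) hIφ]
        exact setIntegral_congr_fun measurableSet_Ioi (fun τ _ => by ring)
      rw [hsplit, hval, hU x t hx0]
      field_simp
    have h0 := (aux19_tendsto φ K hφL M hφB t).const_mul (1 / (2 * Real.sqrt π))
    exact h0.congr' key
  · rw [Real.Gamma_one_half_eq]
    congr 1
    ring
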